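/- Let n ≥ 2 and let κ = (κ_1,…,κ_n) ∈ K_2 be ordered decreasingly, κ_1 ≥ κ_2 ≥ ⋯ ≥ κ_n. Then κ_n > −((n−2)/n)·S_1(κ). -/
import Mathlib

open Finset

/-- The `k`-th elementary symmetric polynomial of `x ∈ ℝ^m`. -/
noncomputable def esymm {m : ℕ} (k : ℕ) (x : Fin m → ℝ) : ℝ :=
  ∑ t ∈ Finset.powersetCard k (Finset.univ : Finset (Fin m)), ∏ i ∈ t, x i

lemma esymm_one_eq {m : ℕ} (x : Fin m → ℝ) : esymm 1 x = ∑ i, x i := by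
  rw [esymm, Finset.powersetCard_one, Finset.sum_map]
  simp

lemma esymm_two_eq {m : ℕ} (x : Fin m → ℝ) :
    esymm 2 x = ∑ p ∈ Finset.univ.offDiag with p.1 < p.2, x p.1 * x p.2 := by
  rw [esymm]
  symm
  apply Finset.sum_bij (fun p _ => ({p.1, p.2} : Finset (Fin m)))
  · rintro ⟨i, j⟩ hp
    simp only [Finset.mem_filter, Finset.mem_offDiag] at hp
    simp only [Finset.mem_powersetCard]
    exact ⟨Finset.subset_univ _, Finset.card_pair hp.1.2.2⟩
  · rintro ⟨i, j⟩ hp ⟨i', j'⟩ hp' h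
    simp only [Finset.mem_filter, Finset.mem_offDiag] at hp hp'
    have hij := hp.2
    have hij' := hp'.2
    have hi : i ∈ ({i', j'} : Finset (Fin m)) := h ▸ Finset.mem_insert_self _ _
    have hj : j ∈ ({i', j'} : Finset (Fin m)) := h ▸ (by simp)
    simp only [Finset.mem_insert, Finset.mem_singleton] at hi hj
    rcases hi with h1 | h1 <;> rcases hj with h2 | h2 <;> subst h1 <;> subst h2 <;>
      first
      | rfl
      | (exfalso; exact absurd hij (lt_irrefl _))
      | (exfalso; exact absurd (hij.trans hij') (lt_irrefl _))
  · intro t ht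
    simp only [Finset.mem_powersetCard] at ht
    obtain ⟨a, b, hab, rfl⟩ := Finset.card_eq_two.mp ht.2
    rcases lt_or_gt_of_ne hab with h | h
    · exact ⟨(a, b), by simp [Finset.mem_offDiag, hab, h], rfl⟩
    · exact ⟨(b, a), by simp [Finset.mem_offDiag, hab.symm, h],
        by rw [Finset.pair_comm]⟩
  · rintro ⟨i, j⟩ hp
    simp only [Finset.mem_filter, Finset.mem_offDiag] at hp
    rw [Finset.prod_pair hp.1.2.2]

lemma two_esymm_two {m : ℕ} (x : Fin m → ℝ) :
    2 * esymm 2 x = (∑ i, x i) ^ 2 - ∑ i, x i ^ 2 := by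
  have hswap : ∑ p ∈ Finset.univ.offDiag with p.1 < p.2, x p.1 * x p.2
      = ∑ p ∈ Finset.univ.offDiag with p.2 < p.1, x p.1 * x p.2 := by
    apply Finset.sum_nbij' (fun p => (p.2, p.1)) (fun p => (p.2, p.1)) <;>
      simp +contextual [Finset.mem_offDiag, ne_comm, mul_comm]
  have hsplit : ∑ p ∈ Finset.univ.offDiag, x p.1 * x p.2
      = (∑ p ∈ Finset.univ.offDiag with p.1 < p.2, x p.1 * x p.2)
        + ∑ p ∈ Finset.univ.offDiag with p.2 < p.1, x p.1 * x p.2 := by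
    rw [← Finset.sum_filter_add_sum_filter_not Finset.univ.offDiag (fun p => p.1 < p.2)]
    congr 1
    apply Finset.sum_congr _ (fun _ _ => rfl)
    ext ⟨i, j⟩
    simp only [Finset.mem_filter, Finset.mem_offDiag, not_lt]
    constructor
    · rintro ⟨⟨_, _, hne⟩, hle⟩
      exact ⟨⟨by simp, by simp, hne⟩, lt_of_le_of_ne hle (fun h => hne h.symm)⟩
    · rintro ⟨⟨_, _, hne⟩, hlt⟩
      exact ⟨⟨by simp, by simp, hne⟩, le_of_lt hlt⟩
  have hprod : ∑ p ∈ Finset.univ ×ˢ (Finset.univ : Finset (Fin m)), x p.1 * x p.2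
      = (∑ i, x i) ^ 2 := by
    rw [Finset.sum_product, ← Finset.sum_mul_sum, sq]
  have hdiag : ∑ p ∈ (Finset.univ : Finset (Fin m)).diag, x p.1 * x p.2
      = ∑ i, x i ^ 2 := by
    rw [Finset.sum_diag]
    exact Finset.sum_congr rfl fun i _ => (sq (x i)).symm
  have hunion : ∑ p ∈ (Finset.univ : Finset (Fin m)).diag, x p.1 * x p.2
      + ∑ p ∈ Finset.univ.offDiag, x p.1 * x p.2
      = ∑ p ∈ Finset.univ ×ˢ (Finset.univ : Finset (Fin m)), x p.1 * x p.2 := by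
    rw [← Finset.sum_union (Finset.disjoint_diag_offDiag _), Finset.diag_union_offDiag]
  rw [esymm_two_eq]
  linarith [hswap, hsplit, hprod, hdiag, hunion]

set_option maxHeartbeats 1000000 in
theorem stmt_1 (n : ℕ) (hn : 2 ≤ n) (κ : Fin n → ℝ)
    (hord : ∀ i j : Fin n, i ≤ j → κ j ≤ κ i)
    (h1 : 0 < esymm 1 κ) (h2 : 0 < esymm 2 κ) :
    κ ⟨n - 1, by omega⟩ > -(((n : ℝ) - 2) / n) * esymm 1 κ := by
  set last : Fin n := ⟨n - 1, by omega⟩ with hlast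
  have hmin : ∀ i : Fin n, κ last ≤ κ i := fun i =>
    hord i last (by simp [hlast, Fin.le_def]; omega)
  set s := ∑ i, κ i with hs
  set a := κ last with ha
  have he1 : esymm 1 κ = s := esymm_one_eq κ
  have he2 : 2 * esymm 2 κ = s ^ 2 - ∑ i, κ i ^ 2 := two_esymm_two κ
  -- min ≤ average
  have hna : (n : ℝ) * a ≤ s := by
    calc (n : ℝ) * a = ∑ _i : Fin n, a := by simp [mul_comm]
    _ ≤ s := Finset.sum_le_sum fun i _ => hmin i
  -- Cauchy–Schwarz on the other entries
  have hsplit : s = a + ∑ i ∈ Finset.univ.erase last, κ i := by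
    rw [hs, ← Finset.add_sum_erase _ _ (Finset.mem_univ last)]
  have hsqsplit : ∑ i, κ i ^ 2 = a ^ 2 + ∑ i ∈ Finset.univ.erase last, κ i ^ 2 := by
    rw [← Finset.add_sum_erase _ _ (Finset.mem_univ last)]
  have hcard : ((Finset.univ.erase last).card : ℝ) = (n : ℝ) - 1 := by
    rw [Finset.card_erase_of_mem (Finset.mem_univ last)]
    simp
    push_cast [Nat.cast_sub (by omega : 1 ≤ n)]
    ring
  have hCS : (∑ i ∈ Finset.univ.erase last, κ i) ^ 2
      ≤ ((n : ℝ) - 1) * ∑ i ∈ Finset.univ.erase last, κ i ^ 2 := by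
    have := sq_sum_le_card_mul_sum_sq (s := Finset.univ.erase last) (f := κ)
    calc (∑ i ∈ Finset.univ.erase last, κ i) ^ 2
        ≤ ((Finset.univ.erase last).card : ℝ) * ∑ i ∈ Finset.univ.erase last, κ i ^ 2 := this
      _ = ((n : ℝ) - 1) * ∑ i ∈ Finset.univ.erase last, κ i ^ 2 := by rw [hcard]
  have hn1 : (1 : ℝ) ≤ (n : ℝ) - 1 := by
    have : (2 : ℝ) ≤ n := by exact_mod_cast hn
    linarith
  have hnpos : (0 : ℝ) < n := by positivity
  rw [he1] at h1 ⊢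
  -- key inequality: (n-1) s^2 > (n-1) q ≥ (n-1) a^2 + (s - a)^2
  have hq : ((n : ℝ) - 1) * (∑ i, κ i ^ 2) ≥ ((n : ℝ) - 1) * a ^ 2 + (s - a) ^ 2 := by
    rw [hsqsplit]
    have : (s - a) = ∑ i ∈ Finset.univ.erase last, κ i := by linarith [hsplit]
    rw [this]
    nlinarith [hCS]
  have hqs : s ^ 2 > ∑ i, κ i ^ 2 := by nlinarith [h2, he2]
  have hkey : ((n : ℝ) - 1) * s ^ 2 > ((n : ℝ) - 1) * a ^ 2 + (s - a) ^ 2 := by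
    nlinarith [hqs, hq]
  -- i.e. (a - s)(n a + (n-2) s) < 0, with a < s
  have hasub : a < s := by nlinarith [hna, h1, hn1, hnpos]
  have hfac : (a - s) * ((n : ℝ) * a + ((n : ℝ) - 2) * s) < 0 := by nlinarith [hkey]
  have hpos : (n : ℝ) * a + ((n : ℝ) - 2) * s > 0 := by
    rcases lt_or_ge 0 ((n : ℝ) * a + ((n : ℝ) - 2) * s) with h | h
    · exact h
    · nlinarith [hfac, hasub]
  rw [gt_iff_lt, neg_mul, neg_lt, div_mul_eq_mul_div, lt_div_iff₀ hnpos]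
  nlinarith [hpos]
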